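/- Let A be an N×N nonnegative matrix, α > 0, ψ : ℝ≥0 → (0,1] decreasing, and define χ(A) = min over i ≠ j of (A_{ij} + A_{ji} + ∑_{k ≠ i,j} min(A_{ik}, A_{jk})). Suppose (x_i, v_i) solve the Cucker–Smale system x_i' = v_i, v_i'(t) = α ∑_j A_{ij} ψ(‖x_j − x_i‖₂)(v_j − v_i), and set X(t) = sup_{i,j} ‖x_i(t) − x_j(t)‖₂, V(t) = sup_{i,j} ‖v_i(t) − v_j(t)‖₂. If V(0) < α·χ(A)·∫_{X(0)}^∞ ψ(r) dr, then sup_t X(t) < ∞ and V(t) → 0 (flocking occurs). -/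

import Mathlib

open MeasureTheory Set Finset Filter

open scoped RealInnerProductSpace

/-- Dini-type slope bound for a finite supremum of functions. -/
lemma csflock_slope {ι : Type*} (s : Finset ι) (hs : s.Nonempty) (f : ι → ℝ → ℝ)
    (F : ℝ → ℝ) (hFeq : ∀ t, F t = s.sup' hs fun i => f i t) (x r : ℝ)
    (h : ∀ i ∈ s, (∃ d, d < r ∧ HasDerivAt (f i) d x) ∨
      (f i x < F x ∧ ContinuousAt (f i) x)) :
    ∀ᶠ z in nhdsWithin x (Set.Ioi x), slope F x z < r := by
  have hF : F = fun t => s.sup' hs fun i => f i t := funext hFeq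
  subst hF
  set F : ℝ → ℝ := fun t => s.sup' hs fun i => f i t with hF
  have key : ∀ i ∈ s, ∀ᶠ z in nhdsWithin x (Set.Ioi x), f i z - F x < r * (z - x) := by
    intro i hi
    rcases h i hi with ⟨d, hdr, hder⟩ | ⟨hlt, hcont⟩
    · have hslope : Tendsto (slope (f i) x) (nhdsWithin x (Set.Ioi x)) (nhds d) :=
        (hasDerivAt_iff_tendsto_slope.1 hder).mono_left
          (nhdsWithin_mono x (fun z hz => ne_of_gt hz))
      have h1 : ∀ᶠ z in nhdsWithin x (Set.Ioi x), slope (f i) x z < r :=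
        hslope.eventually_lt_const hdr
      filter_upwards [h1, self_mem_nhdsWithin] with z hz hzx
      have hzx' : (0:ℝ) < z - x := sub_pos.2 hzx
      have h2 : (f i z - f i x) / (z - x) < r := by
        rwa [slope_def_field] at hz
      have hFi : f i x ≤ F x := Finset.le_sup' (fun j => f j x) hi
      have := (div_lt_iff₀ hzx').1 h2
      linarith
    · have h1 : ∀ᶠ z in nhdsWithin x (Set.Ioi x), f i z < (f i x + F x) / 2 := by
        have := (hcont.tendsto.mono_left (nhdsWithin_le_nhds (s := Set.Ioi x)))
        exact this.eventually_lt_const (by linarith)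
      have h2 : ∀ᶠ z in nhdsWithin x (Set.Ioi x), (f i x - F x) / 2 < r * (z - x) := by
        have ht : Tendsto (fun z => r * (z - x)) (nhdsWithin x (Set.Ioi x)) (nhds 0) := by
          have : Tendsto (fun z : ℝ => r * (z - x)) (nhds x) (nhds (r * (x - x))) :=
            (tendsto_id.sub_const x).const_mul r
          simpa using this.mono_left nhdsWithin_le_nhds
        exact ht.eventually_const_lt (by linarith)
      filter_upwards [h1, h2] with z hz1 hz2
      linarith
  have hall : ∀ᶠ z in nhdsWithin x (Set.Ioi x), ∀ i ∈ s, f i z - F x < r * (z - x) :=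
    (Filter.eventually_all_finset s).2 key
  filter_upwards [hall, self_mem_nhdsWithin] with z hz hzx
  have hzx' : (0:ℝ) < z - x := sub_pos.2 hzx
  have hFz : F z < F x + r * (z - x) := by
    apply (Finset.sup'_lt_iff hs).2
    intro i hi
    have := hz i hi
    linarith
  rw [slope_def_field, div_lt_iff₀ hzx']
  linarith

/-- If the right lower Dini derivative of `f` is `≤ 0` everywhere, `f` is nonincreasing. -/
lemma csflock_le {f : ℝ → ℝ} {a b : ℝ} (hab : a ≤ b) (hc : ContinuousOn f (Set.Icc a b))
    (h : ∀ x ∈ Set.Ico a b, ∀ r : ℝ, 0 < r → ∃ᶠ z in nhdsWithin x (Set.Ioi x), slope f x z < r) :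
    f b ≤ f a := by
  have H : ∀ ε : ℝ, 0 < ε → f b ≤ f a + ε * (b - a) := by
    intro ε hε
    have hB : ∀ t : ℝ, HasDerivAt (fun t => f a + ε * (t - a)) ε t := by
      intro t
      have : HasDerivAt (fun t : ℝ => f a + ε * (t - a)) (0 + ε * 1) t :=
        (hasDerivAt_const t (f a)).add (((hasDerivAt_id t).sub_const a).const_mul ε)
      simpa using this
    have := image_le_of_liminf_slope_right_lt_deriv_boundary (f := f) (f' := fun _ => 0)
      hc (fun x hx r hr => h x hx r hr) (B := fun t => f a + ε * (t - a)) (B' := fun _ => ε)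
      (by simp) hB (fun x _ _ => hε)
    simpa using this (Set.right_mem_Icc.2 hab)
  rcases eq_or_lt_of_le hab with rfl | hlt
  · simpa using H 1 one_pos
  · refine le_of_forall_pos_le_add fun η hη => ?_
    have := H (η / (b - a)) (div_pos hη (by linarith))
    rw [div_mul_cancel₀] at this
    · linarith
    · linarith

/-- Scrambling coefficient `χ(A) = min_{i≠j} (A i j + A j i + ∑_{k≠i,j} min (A i k) (A j k))`. -/
noncomputable def scramblingCoeff {N : ℕ} (A : Matrix (Fin N) (Fin N) ℝ) : ℝ :=
  ⨅ p : {p : Fin N × Fin N // p.1 ≠ p.2},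
    (A p.1.1 p.1.2 + A p.1.2 p.1.1 +
      ∑ k ∈ Finset.univ \ {p.1.1, p.1.2}, min (A p.1.1 k) (A p.1.2 k))

set_option maxHeartbeats 3000000 in
/-- Flocking for the Cucker–Smale model under the scrambling assumption: if
`V(0) < α χ(A) ∫_{X(0)}^∞ ψ(r) dr`, then the position diameter stays bounded and the
velocity diameter tends to `0`. -/
theorem stmt_15 (N d : ℕ) (hN : 2 ≤ N) (α : ℝ) (hα : 0 < α)
    (A : Matrix (Fin N) (Fin N) ℝ) (hAnn : ∀ i j, 0 ≤ A i j) (hAdiag : ∀ i, A i i = 0)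
    (ψ : ℝ → ℝ) (hψpos : ∀ r, 0 ≤ r → 0 < ψ r) (hψle : ∀ r, 0 ≤ r → ψ r ≤ 1)
    (hψdec : ∀ r s, 0 ≤ r → r ≤ s → ψ s ≤ ψ r)
    (x v : Fin N → ℝ → EuclideanSpace ℝ (Fin d))
    (hx : ∀ i t, HasDerivAt (x i) (v i t) t)
    (hv : ∀ i t, HasDerivAt (v i)
      (∑ j, (α * A i j * ψ ‖x j t - x i t‖) • (v j t - v i t)) t)
    (X V : ℝ → ℝ)
    (hX : ∀ t, X t = ⨆ i : Fin N, ⨆ j : Fin N, ‖x i t - x j t‖)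
    (hV : ∀ t, V t = ⨆ i : Fin N, ⨆ j : Fin N, ‖v i t - v j t‖)
    (hcond : ENNReal.ofReal (V 0) <
      ENNReal.ofReal (α * scramblingCoeff A) *
        ∫⁻ r in Ioi (X 0), ENNReal.ofReal (ψ r)) :
    (∃ M : ℝ, ∀ t, 0 ≤ t → X t ≤ M) ∧ Tendsto V atTop (nhds 0) := by
  classical
  have hN0 : 0 < N := by omega
  have hN1 : 1 < N := by omega
  haveI : Nonempty (Fin N) := ⟨⟨0, hN0⟩⟩
  have hne : (Finset.univ : Finset (Fin N × Fin N)).Nonempty :=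
    ⟨(⟨0, hN0⟩, ⟨0, hN0⟩), Finset.mem_univ _⟩
  -- flatten the nested suprema
  have flat : ∀ g : Fin N → Fin N → ℝ,
      (⨆ i, ⨆ j, g i j) = Finset.univ.sup' hne (fun p => g p.1 p.2) := by
    intro g
    apply le_antisymm
    · refine ciSup_le fun i => ciSup_le fun j => ?_
      exact Finset.le_sup' (fun p : Fin N × Fin N => g p.1 p.2) (Finset.mem_univ (i, j))
    · refine Finset.sup'_le _ _ ?_
      rintro ⟨i, j⟩ -
      calc g i j ≤ ⨆ j, g i j := le_ciSup (Set.Finite.bddAbove (Set.finite_range _)) j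
        _ ≤ ⨆ i, ⨆ j, g i j :=
          le_ciSup (f := fun i => ⨆ j, g i j) (Set.Finite.bddAbove (Set.finite_range _)) i
  have hVs : ∀ t, V t = Finset.univ.sup' hne (fun p => ‖v p.1 t - v p.2 t‖) :=
    fun t => (hV t).trans (flat _)
  have hXs : ∀ t, X t = Finset.univ.sup' hne (fun p => ‖x p.1 t - x p.2 t‖) :=
    fun t => (hX t).trans (flat _)
  have hVle : ∀ t i j, ‖v i t - v j t‖ ≤ V t := fun t i j => by
    rw [hVs t]
    exact Finset.le_sup' (fun p : Fin N × Fin N => ‖v p.1 t - v p.2 t‖) (Finset.mem_univ (i, j))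
  have hXle : ∀ t i j, ‖x i t - x j t‖ ≤ X t := fun t i j => by
    rw [hXs t]
    exact Finset.le_sup' (fun p : Fin N × Fin N => ‖x p.1 t - x p.2 t‖) (Finset.mem_univ (i, j))
  have hVnn : ∀ t, 0 ≤ V t := fun t => le_trans (norm_nonneg _) (hVle t ⟨0, hN0⟩ ⟨0, hN0⟩)
  have hXnn : ∀ t, 0 ≤ X t := fun t => le_trans (norm_nonneg _) (hXle t ⟨0, hN0⟩ ⟨0, hN0⟩)
  -- continuity
  have hvc : ∀ i, Continuous (v i) := fun i =>
    continuous_iff_continuousAt.2 fun t => (hv i t).continuousAt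
  have hxc : ∀ i, Continuous (x i) := fun i =>
    continuous_iff_continuousAt.2 fun t => (hx i t).continuousAt
  have hVcont : Continuous V := by
    rw [show V = fun t => Finset.univ.sup' hne (fun p => ‖v p.1 t - v p.2 t‖) from funext hVs]
    exact continuous_iff_continuousAt.2 fun t =>
      ContinuousAt.finset_sup'_apply hne fun p _ => (((hvc p.1).sub (hvc p.2)).norm).continuousAt
  have hXcont : Continuous X := by
    rw [show X = fun t => Finset.univ.sup' hne (fun p => ‖x p.1 t - x p.2 t‖) from funext hXs]
    exact continuous_iff_continuousAt.2 fun t =>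
      ContinuousAt.finset_sup'_apply hne fun p _ => (((hxc p.1).sub (hxc p.2)).norm).continuousAt
  -- scrambling coefficient
  haveI hPne : Nonempty {p : Fin N × Fin N // p.1 ≠ p.2} :=
    ⟨⟨(⟨0, hN0⟩, ⟨1, hN1⟩), by simp [Fin.ext_iff]⟩⟩
  have hχnn : 0 ≤ scramblingCoeff A := by
    unfold scramblingCoeff
    refine le_ciInf fun p => ?_
    have h1 : 0 ≤ ∑ k ∈ Finset.univ \ {p.1.1, p.1.2}, min (A p.1.1 k) (A p.1.2 k) :=
      Finset.sum_nonneg fun k _ => le_min (hAnn _ _) (hAnn _ _)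
    have h2 := hAnn p.1.1 p.1.2
    have h3 := hAnn p.1.2 p.1.1
    linarith
  have hχle : ∀ (i j : Fin N), i ≠ j → scramblingCoeff A ≤
      A i j + A j i + ∑ k ∈ Finset.univ \ {i, j}, min (A i k) (A j k) := by
    intro i j hij
    unfold scramblingCoeff
    have hbdd : BddBelow (Set.range fun p : {p : Fin N × Fin N // p.1 ≠ p.2} =>
        A p.1.1 p.1.2 + A p.1.2 p.1.1 +
          ∑ k ∈ Finset.univ \ {p.1.1, p.1.2}, min (A p.1.1 k) (A p.1.2 k)) :=
      Set.Finite.bddBelow (Set.finite_range _)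
    exact ciInf_le hbdd ⟨(i, j), hij⟩
  set c : ℝ := α * scramblingCoeff A with hcdef
  have hc : 0 < c := by
    rcases lt_or_eq_of_le hχnn with h | h
    · exact mul_pos hα h
    · exfalso
      rw [hcdef, ← h, mul_zero, ENNReal.ofReal_zero, zero_mul] at hcond
      simp at hcond
  -- derivative data
  set D : Fin N → ℝ → EuclideanSpace ℝ (Fin d) :=
    fun i t => ∑ j, (α * A i j * ψ ‖x j t - x i t‖) • (v j t - v i t) with hD
  have hvD : ∀ i t, HasDerivAt (v i) (D i t) t := hv
  have hu : ∀ (p : Fin N × Fin N) (t : ℝ),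
      HasDerivAt (fun s => v p.1 s - v p.2 s) (D p.1 t - D p.2 t) t :=
    fun p t => (hvD p.1 t).sub (hvD p.2 t)
  -- the key dissipation estimate
  have key : ∀ (t : ℝ) (i j : Fin N), i ≠ j → ‖v i t - v j t‖ = V t →
      ⟪v i t - v j t, D i t - D j t⟫ ≤ -(c * ψ (X t) * V t ^ 2) := by
    intro t i j hij hmax
    have hψX : 0 < ψ (X t) := hψpos _ (hXnn t)
    set uu : EuclideanSpace ℝ (Fin d) := v i t - v j t with huu
    have hnu : ‖uu‖ = V t := hmax
    have hnu2 : ‖uu‖ ^ 2 = V t ^ 2 := by rw [hnu]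
    have hainner : ∀ k, ⟪uu, v k t - v i t⟫ = ⟪uu, v k t - v j t⟫ - ‖uu‖ ^ 2 := by
      intro k
      have hsub : v k t - v i t = (v k t - v j t) - uu := by rw [huu]; abel
      rw [hsub, inner_sub_right, real_inner_self_eq_norm_sq]
    have ha : ∀ k, ⟪uu, v k t - v i t⟫ ≤ 0 := by
      intro k
      have h1 := real_inner_le_norm uu (v k t - v j t)
      have h2 := hVle t k j
      rw [hainner k]
      nlinarith [hVnn t]
    have he : ∀ k, 0 ≤ ⟪uu, v k t - v j t⟫ := by
      intro k
      have h1 := real_inner_le_norm uu (v i t - v k t)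
      have e1 : v i t - v k t = -(v k t - v i t) := by abel
      rw [e1, inner_neg_right, norm_neg] at h1
      rw [hnu] at h1
      have h2 := hVle t k i
      have h3 := hainner k
      rw [hnu2] at h3
      nlinarith [mul_le_mul_of_nonneg_left h2 (hVnn t)]
    set term : Fin N → ℝ := fun k =>
      α * A i k * ψ ‖x k t - x i t‖ * ⟪uu, v k t - v i t⟫
        - α * A j k * ψ ‖x k t - x j t‖ * ⟪uu, v k t - v j t⟫ with hterm_def
    have hexp : ⟪uu, D i t - D j t⟫ = ∑ k, term k := by
      rw [inner_sub_right]
      simp only [hD]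
      rw [inner_sum, inner_sum, ← Finset.sum_sub_distrib]
      refine Finset.sum_congr rfl fun k _ => ?_
      rw [real_inner_smul_right, real_inner_smul_right, hterm_def]
    have hterm : ∀ k, term k ≤ -(α * ψ (X t) * ‖uu‖ ^ 2 * min (A i k) (A j k)) := by
      intro k
      have hae : ⟪uu, v k t - v i t⟫ - ⟪uu, v k t - v j t⟫ = -‖uu‖ ^ 2 := by
        rw [hainner k]; ring
      have hmn : 0 ≤ min (A i k) (A j k) := le_min (hAnn _ _) (hAnn _ _)
      have h1 : α * min (A i k) (A j k) * ψ (X t) ≤ α * A i k * ψ ‖x k t - x i t‖ :=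
        mul_le_mul (mul_le_mul_of_nonneg_left (min_le_left _ _) hα.le)
          (hψdec _ _ (norm_nonneg _) (hXle t k i)) hψX.le (mul_nonneg hα.le (hAnn _ _))
      have h2 : α * min (A i k) (A j k) * ψ (X t) ≤ α * A j k * ψ ‖x k t - x j t‖ :=
        mul_le_mul (mul_le_mul_of_nonneg_left (min_le_right _ _) hα.le)
          (hψdec _ _ (norm_nonneg _) (hXle t k j)) hψX.le (mul_nonneg hα.le (hAnn _ _))
      have p1 : α * A i k * ψ ‖x k t - x i t‖ * ⟪uu, v k t - v i t⟫
          ≤ α * min (A i k) (A j k) * ψ (X t) * ⟪uu, v k t - v i t⟫ :=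
        mul_le_mul_of_nonpos_right h1 (ha k)
      have p2 : α * min (A i k) (A j k) * ψ (X t) * ⟪uu, v k t - v j t⟫
          ≤ α * A j k * ψ ‖x k t - x j t‖ * ⟪uu, v k t - v j t⟫ :=
        mul_le_mul_of_nonneg_right h2 (he k)
      have hid : α * min (A i k) (A j k) * ψ (X t) *
          (⟪uu, v k t - v i t⟫ - ⟪uu, v k t - v j t⟫)
          = -(α * ψ (X t) * ‖uu‖ ^ 2 * min (A i k) (A j k)) := by
        rw [hae]; ring
      rw [hterm_def]
      simp only
      nlinarith [p1, p2, hid]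
    have hψji : ψ (X t) ≤ ψ ‖x i t - x j t‖ := hψdec _ _ (norm_nonneg _) (hXle t i j)
    have hψij : ψ (X t) ≤ ψ ‖x j t - x i t‖ := hψdec _ _ (norm_nonneg _) (hXle t j i)
    have hdiagi : term i ≤ -(α * ψ (X t) * ‖uu‖ ^ 2 * A j i) := by
      have hai : ⟪uu, v i t - v i t⟫ = 0 := by simp
      have hei : ⟪uu, v i t - v j t⟫ = ‖uu‖ ^ 2 := by
        rw [← huu, real_inner_self_eq_norm_sq]
      rw [hterm_def]
      simp only [hAdiag i, hai, hei, mul_zero, zero_mul, zero_sub]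
      nlinarith [mul_le_mul_of_nonneg_left hψji
        (mul_nonneg (mul_nonneg hα.le (hAnn j i)) (sq_nonneg ‖uu‖))]
    have hdiagj : term j ≤ -(α * ψ (X t) * ‖uu‖ ^ 2 * A i j) := by
      have haj : ⟪uu, v j t - v i t⟫ = -‖uu‖ ^ 2 := by
        rw [show v j t - v i t = -uu by rw [huu]; abel, inner_neg_right,
          real_inner_self_eq_norm_sq]
      have hej : ⟪uu, v j t - v j t⟫ = 0 := by simp
      rw [hterm_def]
      simp only [hAdiag j, haj, hej, mul_zero, zero_mul, sub_zero]
      nlinarith [mul_le_mul_of_nonneg_left hψij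
        (mul_nonneg (mul_nonneg hα.le (hAnn i j)) (sq_nonneg ‖uu‖))]
    set S : ℝ := ∑ k ∈ Finset.univ \ {i, j}, min (A i k) (A j k) with hS
    have hsum : (∑ k, term k) = term i + term j + ∑ k ∈ Finset.univ \ {i, j}, term k := by
      rw [← Finset.sum_sdiff (Finset.subset_univ ({i, j} : Finset (Fin N))),
        Finset.sum_pair hij]
      ring
    have hmid : ∑ k ∈ Finset.univ \ {i, j}, term k ≤ -(α * ψ (X t) * ‖uu‖ ^ 2 * S) := by
      calc ∑ k ∈ Finset.univ \ {i, j}, term k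
          ≤ ∑ k ∈ Finset.univ \ {i, j}, -(α * ψ (X t) * ‖uu‖ ^ 2 * min (A i k) (A j k)) :=
            Finset.sum_le_sum fun k _ => hterm k
        _ = -(α * ψ (X t) * ‖uu‖ ^ 2 * S) := by
            rw [hS, Finset.mul_sum, ← Finset.sum_neg_distrib]
    have htot : ⟪uu, D i t - D j t⟫ ≤ -(α * ψ (X t) * ‖uu‖ ^ 2 * (A i j + A j i + S)) := by
      rw [hexp, hsum]
      have := hdiagi; have := hdiagj
      nlinarith [hmid]
    have hq : (0:ℝ) ≤ α * ψ (X t) * ‖uu‖ ^ 2 :=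
      mul_nonneg (mul_nonneg hα.le hψX.le) (sq_nonneg _)
    have hfin := mul_le_mul_of_nonneg_left (hχle i j hij) hq
    calc ⟪uu, D i t - D j t⟫ ≤ -(α * ψ (X t) * ‖uu‖ ^ 2 * (A i j + A j i + S)) := htot
      _ ≤ -(α * ψ (X t) * ‖uu‖ ^ 2 * scramblingCoeff A) := by linarith
      _ = -(c * ψ (X t) * V t ^ 2) := by rw [hnu2, hcdef]; ring
  -- uniform bound on velocity derivatives
  set R : ℝ := Finset.univ.sup' Finset.univ_nonempty (fun i : Fin N => ∑ k, A i k) with hR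
  have hRnn : 0 ≤ R := by
    have h1 : (0:ℝ) ≤ ∑ k, A ⟨0, hN0⟩ k := Finset.sum_nonneg fun k _ => hAnn _ k
    have h2 : (∑ k, A ⟨0, hN0⟩ k) ≤ R :=
      Finset.le_sup' (fun i : Fin N => ∑ k, A i k) (Finset.mem_univ (⟨0, hN0⟩ : Fin N))
    linarith
  set K : ℝ := 1 + 2 * α * R with hK
  have hK0 : 0 < K := by nlinarith
  have hDb : ∀ (i : Fin N) (t : ℝ), ‖D i t‖ ≤ α * R * V t := by
    intro i t
    have hstep : ∀ k : Fin N, ‖(α * A i k * ψ ‖x k t - x i t‖) • (v k t - v i t)‖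
        ≤ α * A i k * V t := by
      intro k
      rw [norm_smul]
      have hψk := hψpos _ (norm_nonneg (x k t - x i t))
      have hψk1 := hψle _ (norm_nonneg (x k t - x i t))
      have hAααnn : (0:ℝ) ≤ α * A i k := mul_nonneg hα.le (hAnn i k)
      have h1 : ‖α * A i k * ψ ‖x k t - x i t‖‖ ≤ α * A i k := by
        rw [Real.norm_eq_abs, abs_of_nonneg (mul_nonneg hAααnn hψk.le)]
        nlinarith [mul_le_mul_of_nonneg_left hψk1 hAααnn]
      exact mul_le_mul h1 (hVle t k i) (norm_nonneg _) hAααnn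
    calc ‖D i t‖ ≤ ∑ k, ‖(α * A i k * ψ ‖x k t - x i t‖) • (v k t - v i t)‖ := by
          simp only [hD]; exact norm_sum_le _ _
      _ ≤ ∑ k, α * A i k * V t := Finset.sum_le_sum fun k _ => hstep k
      _ = α * (∑ k, A i k) * V t := by rw [← Finset.sum_mul, ← Finset.mul_sum]
      _ ≤ α * R * V t := by
          have h1 : (∑ k, A i k) ≤ R := by
            rw [hR]
            exact Finset.le_sup' (fun i : Fin N => ∑ k, A i k) (Finset.mem_univ i)
          exact mul_le_mul_of_nonneg_right (mul_le_mul_of_nonneg_left h1 hα.le) (hVnn t)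
  have hDpair : ∀ (p : Fin N × Fin N) (t : ℝ), ‖D p.1 t - D p.2 t‖ ≤ K * V t := by
    intro p t
    calc ‖D p.1 t - D p.2 t‖ ≤ ‖D p.1 t‖ + ‖D p.2 t‖ := norm_sub_le _ _
      _ ≤ α * R * V t + α * R * V t := add_le_add (hDb p.1 t) (hDb p.2 t)
      _ ≤ K * V t := by nlinarith [hVnn t]
  -- movement bounds
  have hVmove : ∀ a b η : ℝ, a ≤ b → 0 ≤ η → (∀ s ∈ Set.Icc a b, V s ≤ η) →
      ∀ z ∈ Set.Icc a b, V z ≤ V a + K * η * (z - a) := by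
    intro a b η hab hη hbound z hz
    rw [hVs z]
    refine Finset.sup'_le _ _ fun p _ => ?_
    have hseg := norm_image_sub_le_of_norm_deriv_le_segment'
      (f := fun s => v p.1 s - v p.2 s) (f' := fun s => D p.1 s - D p.2 s) (C := K * η)
      (fun s hs => (hu p s).hasDerivWithinAt)
      (fun s hs => le_trans (hDpair p s)
        (mul_le_mul_of_nonneg_left (hbound s (Set.Ico_subset_Icc_self hs)) hK0.le)) z hz
    have htri := norm_sub_norm_le (v p.1 z - v p.2 z) (v p.1 a - v p.2 a)
    have hVa := hVle a p.1 p.2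
    have : ‖v p.1 z - v p.2 z - (v p.1 a - v p.2 a)‖ ≤ K * η * (z - a) := hseg
    linarith
  have hXmove : ∀ a b η : ℝ, a ≤ b → 0 ≤ η → (∀ s ∈ Set.Icc a b, V s ≤ η) →
      ∀ z ∈ Set.Icc a b, X z ≤ X a + η * (z - a) := by
    intro a b η hab hη hbound z hz
    rw [hXs z]
    refine Finset.sup'_le _ _ fun p _ => ?_
    have hseg := norm_image_sub_le_of_norm_deriv_le_segment'
      (f := fun s => x p.1 s - x p.2 s) (f' := fun s => v p.1 s - v p.2 s) (C := η)
      (fun s hs => ((hx p.1 s).sub (hx p.2 s)).hasDerivWithinAt)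
      (fun s hs => le_trans (hVle s p.1 p.2) (hbound s (Set.Ico_subset_Icc_self hs))) z hz
    have htri := norm_sub_norm_le (x p.1 z - x p.2 z) (x p.1 a - x p.2 a)
    have hXa := hXle a p.1 p.2
    linarith
  -- if V vanishes it stays zero for a short time
  have hzero : ∀ τ z : ℝ, V τ = 0 → τ ≤ z → z ≤ τ + (2 * K)⁻¹ → V z ≤ 0 ∧ X z ≤ X τ := by
    intro τ z h0 hτz hz2
    obtain ⟨y, hy, hymax⟩ :=
      isCompact_Icc.exists_isMaxOn (Set.nonempty_Icc.2 hτz) hVcont.continuousOn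
    have hMnn : 0 ≤ V y := hVnn y
    have hbound : ∀ s ∈ Set.Icc τ z, V s ≤ V y := fun s hs => hymax hs
    have hM0 : V y ≤ 0 := by
      have h1 := hVmove τ z (V y) hτz hMnn hbound y hy
      have h2 : y - τ ≤ (2 * K)⁻¹ := by
        have := hy.2; have := hy.1; linarith
      have h3 : K * V y * (y - τ) ≤ K * V y * (2 * K)⁻¹ :=
        mul_le_mul_of_nonneg_left h2 (mul_nonneg hK0.le hMnn)
      have h4 : K * V y * (2 * K)⁻¹ = V y / 2 := by
        field_simp
      rw [h0] at h1
      nlinarith [h1, h3, h4]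
    have hMeq : V y = 0 := le_antisymm hM0 hMnn
    constructor
    · have := hbound z (Set.right_mem_Icc.2 hτz)
      linarith
    · have h5 := hXmove τ z (V y) hτz hMnn hbound z (Set.right_mem_Icc.2 hτz)
      rw [hMeq] at h5
      linarith
  -- integrability and properties of G
  have hψint : ∀ y1 y2 : ℝ, 0 ≤ y1 → 0 ≤ y2 → IntervalIntegrable ψ volume y1 y2 := by
    intro y1 y2 h1 h2
    apply AntitoneOn.intervalIntegrable
    intro a ha b hb hab
    have ha0 : 0 ≤ a := le_trans (le_min h1 h2) ha.1
    exact hψdec a b ha0 hab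
  set G : ℝ → ℝ := fun y => c * ∫ r in (X 0)..y, ψ r with hG
  have hGdiff : ∀ y1 y2 : ℝ, 0 ≤ y1 → 0 ≤ y2 → G y2 - G y1 = c * ∫ r in y1..y2, ψ r := by
    intro y1 y2 h1 h2
    have hadd := intervalIntegral.integral_add_adjacent_intervals
      (hψint (X 0) y1 (hXnn 0) h1) (hψint y1 y2 h1 h2)
    simp only [hG]
    rw [← hadd]
    ring
  have hGmono : ∀ y1 y2 : ℝ, 0 ≤ y1 → y1 ≤ y2 → G y1 ≤ G y2 := by
    intro y1 y2 h1 h12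
    have hnn : 0 ≤ ∫ r in y1..y2, ψ r :=
      intervalIntegral.integral_nonneg h12 fun s hs => (hψpos s (le_trans h1 hs.1)).le
    have hd := hGdiff y1 y2 h1 (le_trans h1 h12)
    nlinarith [hc.le]
  have hGpsi : ∀ y1 y2 : ℝ, 0 ≤ y1 → y1 ≤ y2 → G y2 - G y1 ≤ c * (ψ y1 * (y2 - y1)) := by
    intro y1 y2 h1 h12
    rw [hGdiff y1 y2 h1 (le_trans h1 h12)]
    have hb : ∀ s ∈ Set.uIoc y1 y2, ‖ψ s‖ ≤ ψ y1 := by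
      intro s hs
      rw [Set.uIoc_of_le h12] at hs
      have hs0 : 0 ≤ s := le_trans h1 hs.1.le
      rw [Real.norm_eq_abs, abs_of_pos (hψpos s hs0)]
      exact hψdec y1 s h1 hs.1.le
    have hn := intervalIntegral.norm_integral_le_of_norm_le_const hb
    rw [Real.norm_eq_abs] at hn
    have h2 : (∫ r in y1..y2, ψ r) ≤ ψ y1 * |y2 - y1| := le_trans (le_abs_self _) hn
    rw [abs_of_nonneg (by linarith)] at h2
    exact mul_le_mul_of_nonneg_left h2 hc.le
  have hGlip : ∀ y1 y2 : ℝ, 0 ≤ y1 → 0 ≤ y2 → |G y2 - G y1| ≤ c * |y2 - y1| := by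
    intro y1 y2 h1 h2
    rw [hGdiff y1 y2 h1 h2, abs_mul, abs_of_nonneg hc.le]
    have hb : ∀ s ∈ Set.uIoc y1 y2, ‖ψ s‖ ≤ 1 := by
      intro s hs
      have hs0 : 0 ≤ s := le_trans (le_min h1 h2) (le_of_lt hs.1)
      rw [Real.norm_eq_abs, abs_of_pos (hψpos s hs0)]
      exact hψle s hs0
    have hn := intervalIntegral.norm_integral_le_of_norm_le_const hb
    rw [Real.norm_eq_abs, one_mul] at hn
    exact mul_le_mul_of_nonneg_left hn hc.le
  have hGXcont : Continuous fun t => G (X t) := by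
    rw [continuous_iff_continuousAt]
    intro t
    rw [ContinuousAt, tendsto_iff_dist_tendsto_zero]
    have h1 : Tendsto (fun z => c * dist (X z) (X t)) (nhds t) (nhds (c * dist (X t) (X t))) :=
      tendsto_const_nhds.mul ((hXcont.tendsto t).dist tendsto_const_nhds)
    simp only [dist_self, mul_zero] at h1
    refine squeeze_zero (fun z => dist_nonneg) (fun z => ?_) h1
    rw [Real.dist_eq, Real.dist_eq]
    exact hGlip (X t) (X z) (hXnn t) (hXnn z)
  have hG0 : G (X 0) = 0 := by simp [hG]
  -- the Lyapunov functional Φ = V + G∘X is nonincreasing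
  have hΦ : ∀ T : ℝ, 0 ≤ T → V T + G (X T) ≤ V 0 + G (X 0) := by
    intro T hT
    refine csflock_le hT (Continuous.continuousOn (hVcont.add hGXcont)) ?_
    intro s hs r hr
    rcases eq_or_lt_of_le (hVnn s) with hV0 | hVpos
    · -- V s = 0
      apply Filter.Eventually.frequently
      have hmem : Set.Ioc s (s + (2 * K)⁻¹) ∈ nhdsWithin s (Set.Ioi s) :=
        Ioc_mem_nhdsGT_of_mem ⟨le_rfl, lt_add_of_pos_right _ (by positivity)⟩
      filter_upwards [hmem] with z hz
      obtain ⟨hVz, hXz⟩ := hzero s z hV0.symm hz.1.le (by linarith [hz.2])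
      have hVz' : V z = 0 := le_antisymm hVz (hVnn z)
      have hGz : G (X z) ≤ G (X s) := hGmono _ _ (hXnn z) hXz
      have hnum : V z + G (X z) - (V s + G (X s)) ≤ 0 := by
        rw [hVz', ← hV0]; linarith
      have hden : (0:ℝ) < z - s := sub_pos.2 hz.1
      have : slope (fun t => V t + G (X t)) s z ≤ 0 := by
        rw [slope_def_field]
        exact div_nonpos_of_nonpos_of_nonneg hnum hden.le
      exact lt_of_le_of_lt this hr
    · -- V s > 0
      set m : ℝ := c * ψ (X s) * V s with hm
      set η : ℝ := r / (2 * (c + 1)) with hη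
      have hη0 : 0 < η := by positivity
      have hψXs := hψpos (X s) (hXnn s)
      -- velocity slope
      have hi : ∀ᶠ z in nhdsWithin s (Set.Ioi s), slope V s z < -m + r / 2 := by
        refine csflock_slope Finset.univ hne (fun p t => ‖v p.1 t - v p.2 t‖) V hVs s
          (-m + r / 2) ?_
        intro p _
        by_cases hp : ‖v p.1 s - v p.2 s‖ = V s
        · left
          have hup : v p.1 s - v p.2 s ≠ 0 := by
            intro h; rw [h, norm_zero] at hp; linarith
          have hij : p.1 ≠ p.2 := by
            intro h; apply hup; rw [h]; simp
          have hpos : (0:ℝ) < ⟪v p.1 s - v p.2 s, v p.1 s - v p.2 s⟫ := by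
            rw [real_inner_self_eq_norm_sq]
            exact pow_pos (norm_pos_iff.2 hup) 2
          have hinner : HasDerivAt (fun t => ⟪v p.1 t - v p.2 t, v p.1 t - v p.2 t⟫)
              (⟪v p.1 s - v p.2 s, D p.1 s - D p.2 s⟫ +
                ⟪D p.1 s - D p.2 s, v p.1 s - v p.2 s⟫) s :=
            (hu p s).inner ℝ (hu p s)
          have hsqrt := (Real.hasDerivAt_sqrt (ne_of_gt hpos)).comp s hinner
          have hfun : (fun t => ‖v p.1 t - v p.2 t‖)
              = fun t => Real.sqrt ⟪v p.1 t - v p.2 t, v p.1 t - v p.2 t⟫ :=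
            funext fun t => by rw [real_inner_self_eq_norm_sq, Real.sqrt_sq (norm_nonneg _)]
          have hder2 : HasDerivAt (fun t => ‖v p.1 t - v p.2 t‖)
              (1 / (2 * Real.sqrt ⟪v p.1 s - v p.2 s, v p.1 s - v p.2 s⟫) *
                (⟪v p.1 s - v p.2 s, D p.1 s - D p.2 s⟫ +
                  ⟪D p.1 s - D p.2 s, v p.1 s - v p.2 s⟫)) s := by
            rw [hfun]; exact hsqrt
          refine ⟨_, ?_, hder2⟩
          have hkey := key s p.1 p.2 hij hp
          have hsq : Real.sqrt ⟪v p.1 s - v p.2 s, v p.1 s - v p.2 s⟫ = V s := by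
            rw [real_inner_self_eq_norm_sq, Real.sqrt_sq (norm_nonneg _), hp]
          have hcomm : ⟪D p.1 s - D p.2 s, v p.1 s - v p.2 s⟫
              = ⟪v p.1 s - v p.2 s, D p.1 s - D p.2 s⟫ := real_inner_comm _ _
          rw [hsq, hcomm]
          have hdle : 1 / (2 * V s) * (⟪v p.1 s - v p.2 s, D p.1 s - D p.2 s⟫ +
              ⟪v p.1 s - v p.2 s, D p.1 s - D p.2 s⟫) ≤ -m := by
            rw [hm]
            have h3 : -(c * ψ (X s) * V s ^ 2) = (-(c * ψ (X s) * V s)) * V s := by ring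
            have h4 : ⟪v p.1 s - v p.2 s, D p.1 s - D p.2 s⟫ ≤ (-(c * ψ (X s) * V s)) * V s := by
              rw [← h3]; exact hkey
            have h5 : ∀ I vs : ℝ, vs ≠ 0 → 1 / (2 * vs) * (I + I) = I / vs := by
              intro I vs hvs
              field_simp
              ring
            rw [h5 _ _ (ne_of_gt hVpos), div_le_iff₀ hVpos]
            linarith
          linarith
        · right
          exact ⟨lt_of_le_of_ne (hVle s p.1 p.2) hp,
            (((hvc p.1).sub (hvc p.2)).norm).continuousAt⟩
      -- position slope
      have hii : ∀ᶠ z in nhdsWithin s (Set.Ioi s),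
          slope (fun t => G (X t)) s z ≤ m + r / 2 := by
        have hcg : ∀ᶠ z in nhds s, V z < V s + η :=
          (hVcont.tendsto s).eventually_lt_const (by linarith)
        obtain ⟨δ, hδ0, hδ⟩ := Metric.eventually_nhds_iff.1 hcg
        have hmem : Set.Ioc s (s + δ / 2) ∈ nhdsWithin s (Set.Ioi s) :=
          Ioc_mem_nhdsGT_of_mem ⟨le_rfl, by linarith⟩
        filter_upwards [hmem] with z hz
        have hzs : s < z := hz.1
        have hVb : ∀ w ∈ Set.Icc s z, V w ≤ V s + η := by
          intro w hw
          refine (hδ ?_).le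
          rw [Real.dist_eq, abs_of_nonneg (by linarith [hw.1])]
          have := hw.2; have := hz.2
          linarith
        have hXz : X z ≤ X s + (V s + η) * (z - s) :=
          hXmove s z (V s + η) hzs.le (by linarith [hVnn s]) hVb z
            (Set.right_mem_Icc.2 hzs.le)
        have hslope : G (X z) - G (X s) ≤ c * ψ (X s) * (V s + η) * (z - s) := by
          rcases le_or_gt (X z) (X s) with hle2 | hlt2
          · have h1 := hGmono _ _ (hXnn z) hle2
            have h2 : (0:ℝ) ≤ c * ψ (X s) * (V s + η) * (z - s) :=
              mul_nonneg (mul_nonneg (mul_nonneg hc.le hψXs.le)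
                (by linarith [hVnn s, hη0.le])) (by linarith)
            linarith
          · have h1 := hGpsi (X s) (X z) (hXnn s) hlt2.le
            have h2 : X z - X s ≤ (V s + η) * (z - s) := by linarith
            have h3 : ψ (X s) * (X z - X s) ≤ ψ (X s) * ((V s + η) * (z - s)) :=
              mul_le_mul_of_nonneg_left h2 hψXs.le
            nlinarith [mul_le_mul_of_nonneg_left h3 hc.le]
        rw [slope_def_field, div_le_iff₀ (by linarith : (0:ℝ) < z - s)]
        have h4 : c * ψ (X s) * η ≤ r / 2 := by
          have hψ1 : ψ (X s) ≤ 1 := hψle _ (hXnn s)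
          have h5 : c * ψ (X s) ≤ c := by nlinarith [hc.le]
          have h6 : c * η ≤ r / 2 := by
            rw [hη, ← mul_div_assoc]
            rw [div_le_div_iff₀ (by nlinarith [hc] : (0:ℝ) < 2 * (c + 1))
              (by norm_num : (0:ℝ) < 2)]
            nlinarith [mul_nonneg hc.le hr.le, hr.le]
          nlinarith [hη0.le, hc.le]
        have hid : c * ψ (X s) * (V s + η) * (z - s)
            = m * (z - s) + (c * ψ (X s) * η) * (z - s) := by rw [hm]; ring
        have h7 : (c * ψ (X s) * η) * (z - s) ≤ (r / 2) * (z - s) :=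
          mul_le_mul_of_nonneg_right h4 (by linarith)
        linarith
      apply Filter.Eventually.frequently
      filter_upwards [hi, hii] with z h1 h2
      have hadd : slope (fun t => V t + G (X t)) s z
          = slope V s z + slope (fun t => G (X t)) s z := by
        simp only [slope_def_field]
        ring
      rw [show slope (V + fun t => G (X t)) s z = _ from hadd]
      linarith
  -- extract a finite horizon X* from the integral condition
  have hXstar : ∃ Y : ℝ, X 0 ≤ Y ∧ V 0 < G Y := by
    set ν := volume.withDensity (fun r => ENNReal.ofReal (ψ r)) with hν
    have hmono : Monotone fun n : ℕ => Set.Ioc (X 0) (X 0 + n) := by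
      intro a b hab y hy
      refine ⟨hy.1, hy.2.trans ?_⟩
      have : (a : ℝ) ≤ b := Nat.cast_le.2 hab
      linarith
    have hUn : ⋃ n : ℕ, Set.Ioc (X 0) (X 0 + n) = Set.Ioi (X 0) := by
      ext y
      simp only [Set.mem_iUnion, Set.mem_Ioc, Set.mem_Ioi]
      constructor
      · rintro ⟨n, h1, _⟩; exact h1
      · intro h1
        obtain ⟨n, hn⟩ := exists_nat_ge (y - X 0)
        exact ⟨n, h1, by linarith⟩
    have hμ := hmono.measure_iUnion (μ := ν)
    rw [hUn] at hμ
    have hr1 : (∫⁻ r in Set.Ioi (X 0), ENNReal.ofReal (ψ r))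
        = ⨆ n : ℕ, ∫⁻ r in Set.Ioc (X 0) (X 0 + n), ENNReal.ofReal (ψ r) := by
      rw [← withDensity_apply _ measurableSet_Ioi, hμ]
      exact iSup_congr fun n => withDensity_apply _ measurableSet_Ioc
    rw [hr1, ENNReal.mul_iSup, lt_iSup_iff] at hcond
    obtain ⟨n, hn⟩ := hcond
    have hcast : (0:ℝ) ≤ (n : ℝ) := Nat.cast_nonneg n
    have hXn : (0:ℝ) ≤ X 0 + n := by linarith [hXnn 0]
    refine ⟨X 0 + n, by linarith, ?_⟩
    have hInt : IntegrableOn ψ (Set.Ioc (X 0) (X 0 + n)) volume :=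
      (hψint (X 0) (X 0 + n) (hXnn 0) hXn).1
    have hae : 0 ≤ᵐ[volume.restrict (Set.Ioc (X 0) (X 0 + n))] ψ :=
      (ae_restrict_iff' measurableSet_Ioc).2
        (Filter.Eventually.of_forall fun y hy => (hψpos y (le_trans (hXnn 0) hy.1.le)).le)
    have heq : (∫⁻ r in Set.Ioc (X 0) (X 0 + n), ENNReal.ofReal (ψ r))
        = ENNReal.ofReal (∫ r in Set.Ioc (X 0) (X 0 + n), ψ r) :=
      (ofReal_integral_eq_lintegral_ofReal hInt hae).symm
    rw [heq, ← ENNReal.ofReal_mul hc.le] at hn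
    have hfin : V 0 < c * ∫ r in Set.Ioc (X 0) (X 0 + n), ψ r := by
      by_contra hcon
      push_neg at hcon
      exact absurd hn (not_lt.2 (ENNReal.ofReal_le_ofReal hcon))
    have hGn : G (X 0 + n) = c * ∫ r in Set.Ioc (X 0) (X 0 + n), ψ r := by
      simp only [hG]
      rw [intervalIntegral.integral_of_le (by linarith)]
    rw [hGn]
    exact hfin
  obtain ⟨Y, hY0, hYlt⟩ := hXstar
  have hYnn : 0 ≤ Y := le_trans (hXnn 0) hY0
  have hXbound : ∀ t : ℝ, 0 ≤ t → X t ≤ Y := by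
    intro t ht
    by_contra hgt
    push_neg at hgt
    have h1 : G Y ≤ G (X t) := hGmono Y (X t) hYnn hgt.le
    have h2 := hΦ t ht
    rw [hG0] at h2
    linarith [hVnn t]
  refine ⟨⟨Y, hXbound⟩, ?_⟩
  -- exponential decay of V
  set δ := ψ Y with hδdef
  have hδ : 0 < δ := hψpos Y hYnn
  have hψδ : ∀ t : ℝ, 0 ≤ t → δ ≤ ψ (X t) := fun t ht =>
    hψdec (X t) Y (hXnn t) (hXbound t ht)
  set k : ℝ := c * δ / 2 with hk
  have hk0 : 0 < k := by positivity
  set B : ℝ → ℝ := fun t => (V 0 ^ 2 + 1) * Real.exp (-k * t) with hB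
  have hBpos : ∀ t, 0 < B t := fun t => by positivity
  have hBderiv : ∀ t, HasDerivAt B (-k * B t) t := by
    intro t
    have h1 : HasDerivAt (fun t : ℝ => -k * t) (-k) t := by
      simpa using (hasDerivAt_id t).const_mul (-k)
    have h2 := (Real.hasDerivAt_exp (-k * t)).comp t h1
    have h3 := h2.const_mul (V 0 ^ 2 + 1)
    have e : -k * B t = (V 0 ^ 2 + 1) * (Real.exp (-k * t) * -k) := by
      simp only [hB]
      ring
    rw [e]
    exact h3
  set W : ℝ → ℝ :=
    fun t => Finset.univ.sup' hne (fun p => ⟪v p.1 t - v p.2 t, v p.1 t - v p.2 t⟫) with hW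
  have hWV : ∀ t, W t = V t ^ 2 := by
    intro t
    apply le_antisymm
    · refine Finset.sup'_le _ _ fun p _ => ?_
      rw [real_inner_self_eq_norm_sq]
      exact pow_le_pow_left₀ (norm_nonneg _) (hVle t p.1 p.2) 2
    · obtain ⟨p, hp, hpe⟩ := Finset.exists_mem_eq_sup' hne
        (fun p : Fin N × Fin N => ‖v p.1 t - v p.2 t‖)
      rw [hVs t, hpe, ← real_inner_self_eq_norm_sq]
      exact Finset.le_sup'
        (fun q : Fin N × Fin N => (⟪v q.1 t - v q.2 t, v q.1 t - v q.2 t⟫ : ℝ)) hp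
  have hWcont : Continuous W := by
    rw [show W = fun t => Finset.univ.sup' hne
        (fun p => ⟪v p.1 t - v p.2 t, v p.1 t - v p.2 t⟫) from rfl]
    refine continuous_iff_continuousAt.2 fun t => ContinuousAt.finset_sup'_apply hne
      fun p _ => ?_
    exact (Continuous.inner ((hvc p.1).sub (hvc p.2)) ((hvc p.1).sub (hvc p.2))).continuousAt
  have hWle : ∀ T : ℝ, 0 ≤ T → W T ≤ B T := by
    intro T hT
    have hmain := image_le_of_liminf_slope_right_lt_deriv_boundary (f := W)
      (f' := fun s => -(2 * k) * W s) (a := 0) (b := T) hWcont.continuousOn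
      ?_ ?_ (B := B) (B' := fun s => -k * B s) hBderiv ?_
    · exact hmain (Set.right_mem_Icc.2 hT)
    · -- slope condition
      intro s hs r hr
      replace hr : -(2 * k) * W s < r := hr
      apply Filter.Eventually.frequently
      refine csflock_slope Finset.univ hne
        (fun p t => ⟪v p.1 t - v p.2 t, v p.1 t - v p.2 t⟫) W (fun t => rfl) s r ?_
      intro p _
      by_cases hp : ⟪v p.1 s - v p.2 s, v p.1 s - v p.2 s⟫ = W s
      · left
        refine ⟨_, ?_, (hu p s).inner ℝ (hu p s)⟩
        have hWnn : 0 ≤ W s := by rw [hWV s]; positivity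
        have hcomm : ⟪D p.1 s - D p.2 s, v p.1 s - v p.2 s⟫
            = ⟪v p.1 s - v p.2 s, D p.1 s - D p.2 s⟫ := real_inner_comm _ _
        rcases eq_or_lt_of_le (hVnn s) with hV0 | hVpos
        · have hu0 : v p.1 s - v p.2 s = 0 := by
            have h1 := hVle s p.1 p.2
            rw [← hV0] at h1
            exact norm_eq_zero.1 (le_antisymm h1 (norm_nonneg _))
          rw [hu0]
          simp only [inner_zero_left, inner_zero_right, add_zero]
          have hWs0 : W s = 0 := by rw [hWV s, ← hV0]; ring
          rw [hWs0, mul_zero] at hr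
          exact hr
        · have hnp : ‖v p.1 s - v p.2 s‖ = V s := by
            have h1 : ‖v p.1 s - v p.2 s‖ ^ 2 = V s ^ 2 := by
              rw [← real_inner_self_eq_norm_sq, hp, hWV s]
            rw [← Real.sqrt_sq (norm_nonneg (v p.1 s - v p.2 s)), h1,
              Real.sqrt_sq (hVnn s)]
          have hij : p.1 ≠ p.2 := by
            intro h
            rw [h, sub_self, norm_zero] at hnp
            linarith
          have hkey := key s p.1 p.2 hij hnp
          have hψs := hψδ s hs.1
          have h2 : ⟪v p.1 s - v p.2 s, D p.1 s - D p.2 s⟫ ≤ -(c * δ * V s ^ 2) := by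
            have h2a : c * δ * V s ^ 2 ≤ c * ψ (X s) * V s ^ 2 :=
              mul_le_mul_of_nonneg_right (mul_le_mul_of_nonneg_left hψs hc.le)
                (sq_nonneg (V s))
            linarith
          rw [hcomm]
          have hWs : W s = V s ^ 2 := hWV s
          have h6 : -(2 * k) * W s = -(c * δ * V s ^ 2) := by rw [hWs, hk]; ring
          have h7 : (0:ℝ) ≤ c * δ * V s ^ 2 :=
            mul_nonneg (mul_nonneg hc.le hδ.le) (sq_nonneg _)
          linarith
      · right
        refine ⟨lt_of_le_of_ne (Finset.le_sup'
          (fun q : Fin N × Fin N => (⟪v q.1 s - v q.2 s, v q.1 s - v q.2 s⟫ : ℝ))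
          (Finset.mem_univ p)) hp, ?_⟩
        exact (Continuous.inner ((hvc p.1).sub (hvc p.2))
          ((hvc p.1).sub (hvc p.2))).continuousAt
    · -- initial condition
      rw [hWV 0]
      simp only [hB, mul_zero, neg_zero, Real.exp_zero, mul_one]
      linarith
    · -- contact condition
      intro s hs hWB
      have hBp := hBpos s
      have h8 : -(2 * k) * W s < -k * B s := by
        rw [hWB]
        nlinarith [mul_pos hk0 hBp]
      exact h8
  -- conclude
  have hBlim : Tendsto B atTop (nhds 0) := by
    have h1 : Tendsto (fun t : ℝ => k * t) atTop atTop :=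
      Tendsto.const_mul_atTop hk0 tendsto_id
    have h2 : Tendsto (fun t : ℝ => -k * t) atTop atBot := by
      have := tendsto_neg_atTop_atBot.comp h1
      simpa [Function.comp_def, neg_mul] using this
    have h3 : Tendsto (fun t : ℝ => Real.exp (-k * t)) atTop (nhds 0) :=
      Real.tendsto_exp_atBot.comp h2
    have h4 := h3.const_mul (V 0 ^ 2 + 1)
    simpa [hB] using h4
  have hsqrtB : Tendsto (fun t => Real.sqrt (B t)) atTop (nhds 0) := by
    have := (Real.continuous_sqrt.tendsto 0).comp hBlim
    simpa [Function.comp_def] using this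
  refine squeeze_zero' (Filter.Eventually.of_forall fun t => hVnn t) ?_ hsqrtB
  filter_upwards [eventually_ge_atTop (0:ℝ)] with t ht
  have h1 := hWle t ht
  rw [hWV t] at h1
  calc V t = Real.sqrt (V t ^ 2) := (Real.sqrt_sq (hVnn t)).symm
    _ ≤ Real.sqrt (B t) := Real.sqrt_le_sqrt h1
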